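/- For every real ν ∈ (0, 1/2], the sequence of gaps (j_{ν,k+1} − j_{ν,k})_{k≥1} between consecutive positive zeros of the Bessel function J_ν is nondecreasing in k, and converges to π as k → ∞. -/

import Mathlib

open MeasureTheory Filter Set

open FormalMultilinearSeries

lemma hasDerivAt_tsum_pow (c : ℕ → ℝ) (hc : ∀ n, c n ≠ 0)
    (hr : Tendsto (fun n : ℕ ↦ ‖c (n+1)‖ / ‖c n‖) atTop (nhds 0)) :
    (∀ t : ℝ, Summable (fun n => c n * t ^ n)) ∧
    (∀ t : ℝ, t ≠ 0 → HasDerivAt (fun u => ∑' n, c n * u ^ n)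
      (∑' n : ℕ, ((n:ℝ)+1) * c (n+1) * t ^ n) t) := by
  set p := ofScalars ℝ c with hp
  have hrad : p.radius = ⊤ :=
    ofScalars_radius_eq_top_of_tendsto ℝ c (Eventually.of_forall hc) hr
  have hsum : p.sum = fun u => ∑' n, c n * u ^ n := by
    funext u
    rw [FormalMultilinearSeries.sum]
    exact tsum_congr fun n => by rw [ofScalars_apply_eq, smul_eq_mul]
  have hball : HasFPowerSeriesOnBall (fun u => ∑' n, c n * u ^ n) p 0 ⊤ := by
    have h0 : HasFPowerSeriesOnBall p.sum p 0 p.radius :=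
      p.hasFPowerSeriesOnBall (by rw [hrad]; exact ENNReal.zero_lt_top)
    rw [hrad, hsum] at h0
    exact h0
  constructor
  · intro t
    have hs := hball.hasSum (y := t) (by simp)
    refine (Summable.congr ⟨_, hs⟩ fun n => ?_)
    rw [ofScalars_apply_eq, smul_eq_mul]
  · intro t ht
    have hd := hball.fderiv
    have hs := hd.hasSum (y := t) (by simp)
    rw [zero_add] at hs
    have hs2 := hs.mapL (ContinuousLinearMap.apply ℝ ℝ t)
    simp only [ContinuousLinearMap.apply_apply] at hs2
    have hterm : ∀ n : ℕ, (p.derivSeries n (fun _ => t)) t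
        = t * (((n:ℝ)+1) * c (n+1) * t ^ n) := by
      intro n
      rw [derivSeries_apply_diag, ofScalars_apply_eq]
      simp only [nsmul_eq_mul, smul_eq_mul]
      push_cast
      ring
    rw [funext hterm] at hs2
    have hs3 := hs2.mul_left t⁻¹
    simp only [← mul_assoc, inv_mul_cancel₀ ht, one_mul] at hs3
    have hdiff : DifferentiableAt ℝ (fun u => ∑' n, c n * u ^ n) t := by
      have := hball.analyticAt_of_mem (y := t) (by simp)
      exact this.differentiableAt
    have hDeriv := hdiff.hasDerivAt
    have : ∑' n : ℕ, ((n:ℝ)+1) * c (n+1) * t ^ n = deriv (fun u => ∑' n, c n * u ^ n) t := by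
      rw [hs3.tsum_eq, ← fderiv_apply_one_eq_deriv]
      have : (fderiv ℝ (fun u => ∑' n, c n * u ^ n) t) t
          = t * (fderiv ℝ (fun u => ∑' n, c n * u ^ n) t) 1 := by
        rw [show t = t • (1:ℝ) by simp, _root_.map_smul]
        simp
      rw [this, ← mul_assoc, inv_mul_cancel₀ ht, one_mul]
    rw [this]
    exact hDeriv

noncomputable def bc (ν : ℝ) (n : ℕ) : ℝ :=
  (-1 : ℝ) ^ n / ((n.factorial : ℝ) * Real.Gamma ((n : ℝ) + ν + 1))

lemma gamma_pos {ν : ℝ} (hν : 0 < ν) (n : ℕ) : 0 < Real.Gamma ((n : ℝ) + ν + 1) :=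
  Real.Gamma_pos_of_pos (by positivity)

lemma bc_ne_zero {ν : ℝ} (hν : 0 < ν) (n : ℕ) : bc ν n ≠ 0 := by
  unfold bc
  have h1 := gamma_pos hν n
  have h2 : (0:ℝ) < n.factorial := by exact_mod_cast n.factorial_pos
  have := pow_ne_zero n (neg_ne_zero.mpr (one_ne_zero (α := ℝ)))
  positivity

lemma bc_succ {ν : ℝ} (hν : 0 < ν) (n : ℕ) :
    bc ν (n+1) = -bc ν n / (((n:ℝ)+1) * ((n:ℝ)+ν+1)) := by
  unfold bc
  have h1 := gamma_pos hν n
  have hup : ((n+1 : ℕ) : ℝ) + ν + 1 = ((n:ℝ) + ν + 1) + 1 := by push_cast; ring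
  rw [hup, Real.Gamma_add_one (by positivity)]
  rw [Nat.factorial_succ]
  have h2 : ((n.factorial : ℝ)) ≠ 0 := by exact_mod_cast n.factorial_ne_zero
  push_cast
  field_simp
  ring

lemma abs_bc_succ {ν : ℝ} (hν : 0 < ν) (n : ℕ) :
    |bc ν (n+1)| = |bc ν n| / (((n:ℝ)+1) * ((n:ℝ)+ν+1)) := by
  rw [bc_succ hν n, abs_div, abs_neg]
  congr 1
  rw [abs_of_pos]
  positivity

lemma ratio_tendsto_aux {ν : ℝ} (hν : 0 < ν) (d : ℕ → ℝ) (hd : ∀ n, d n ≠ 0)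
    (h : ∀ n : ℕ, ‖d (n+1)‖ / ‖d n‖ ≤ 1 / ((n:ℝ)+1)) :
    Tendsto (fun n : ℕ ↦ ‖d (n+1)‖ / ‖d n‖) atTop (nhds 0) := by
  apply squeeze_zero (fun n => by positivity) h
  exact tendsto_one_div_add_atTop_nhds_zero_nat

noncomputable def bc1 (ν : ℝ) (n : ℕ) : ℝ := ((n:ℝ)+1) * bc ν (n+1)
noncomputable def bc2 (ν : ℝ) (n : ℕ) : ℝ := ((n:ℝ)+1) * bc1 ν (n+1)

lemma bc1_ne_zero {ν : ℝ} (hν : 0 < ν) (n : ℕ) : bc1 ν n ≠ 0 := by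
  unfold bc1
  exact mul_ne_zero (by positivity) (bc_ne_zero hν _)

lemma abs_bc1_succ {ν : ℝ} (hν : 0 < ν) (n : ℕ) :
    |bc1 ν (n+1)| = |bc1 ν n| / (((n:ℝ)+1) * ((n:ℝ)+ν+2)) := by
  unfold bc1
  rw [abs_mul, abs_mul, abs_bc_succ hν (n+1)]
  have h1 : |((n:ℝ)+1+1)| = (n:ℝ)+2 := by rw [abs_of_pos] <;> push_cast <;> [ring; positivity]
  have h2 : |((n:ℝ)+1)| = (n:ℝ)+1 := by rw [abs_of_pos] <;> positivity
  push_cast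
  rw [h1, h2]
  have h3 : ((n:ℝ)+1+1) = (n:ℝ)+2 := by ring
  have h4 : ((n:ℝ)+1+ν+1) = (n:ℝ)+ν+2 := by ring
  rw [h3, h4]
  have hν2 : (0:ℝ) < (n:ℝ)+ν+2 := by positivity
  field_simp

lemma bc_step {ν : ℝ} (hν : 0 < ν) (n : ℕ) :
    |bc ν (n+1)| ≤ |bc ν n| / ((n:ℝ)+1) := by
  rw [abs_bc_succ hν n]
  apply div_le_div_of_nonneg_left (abs_nonneg _) (by positivity)
  nlinarith [Nat.cast_nonneg (α := ℝ) n]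

lemma bc1_step {ν : ℝ} (hν : 0 < ν) (n : ℕ) :
    |bc1 ν (n+1)| ≤ |bc1 ν n| / ((n:ℝ)+1) := by
  rw [abs_bc1_succ hν n]
  apply div_le_div_of_nonneg_left (abs_nonneg _) (by positivity)
  nlinarith [Nat.cast_nonneg (α := ℝ) n, hν]

lemma ratio_of_step {d : ℕ → ℝ} (hd : ∀ n, d n ≠ 0)
    (hstep : ∀ n : ℕ, |d (n+1)| ≤ |d n| / ((n:ℝ)+1)) :
    Tendsto (fun n : ℕ ↦ ‖d (n+1)‖ / ‖d n‖) atTop (nhds 0) := by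
  apply squeeze_zero (fun n => by positivity) (fun n => ?_)
  · exact tendsto_one_div_add_atTop_nhds_zero_nat
  · have h0 : 0 < |d n| := abs_pos.mpr (hd n)
    rw [Real.norm_eq_abs, Real.norm_eq_abs, div_le_div_iff₀ h0 (by positivity)]
    calc |d (n+1)| * ((n:ℝ)+1) ≤ (|d n| / ((n:ℝ)+1)) * ((n:ℝ)+1) := by
          apply mul_le_mul_of_nonneg_right (hstep n) (by positivity)
      _ = |d n| := by field_simp
      _ = 1 * |d n| := by ring

lemma summable_n_mul {d : ℕ → ℝ} (hstep : ∀ n : ℕ, |d (n+1)| ≤ |d n| / ((n:ℝ)+1)) (t : ℝ) :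
    Summable (fun n : ℕ => (n:ℝ) * d n * t ^ n) := by
  apply summable_of_ratio_norm_eventually_le (r := 1/2) (by norm_num)
  filter_upwards [eventually_ge_atTop (⌈2*|t|⌉₊ + 1)] with n hn
  have hn1 : (1:ℝ) ≤ (n:ℝ) := by exact_mod_cast Nat.one_le_iff_ne_zero.mpr (by omega)
  have ht2 : 2*|t| ≤ (n:ℝ) := le_trans (Nat.le_ceil _) (by exact_mod_cast Nat.le_of_succ_le hn)
  simp only [Real.norm_eq_abs, abs_mul, abs_pow]
  push_cast
  have h1 : |(n:ℝ)+1| = (n:ℝ)+1 := abs_of_pos (by positivity)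
  have h2 : |(n:ℝ)| = (n:ℝ) := abs_of_nonneg (by positivity)
  rw [h1, h2, pow_succ]
  calc ((n:ℝ)+1) * |d (n+1)| * (|t|^n * |t|)
      ≤ ((n:ℝ)+1) * (|d n| / ((n:ℝ)+1)) * (|t|^n * |t|) := by
        apply mul_le_mul_of_nonneg_right (mul_le_mul_of_nonneg_left (hstep n) (by positivity))
          (by positivity)
    _ = |d n| * |t|^n * |t| := by field_simp
    _ ≤ |d n| * |t|^n * ((n:ℝ)/2) := by
        apply mul_le_mul_of_nonneg_left (by linarith) (by positivity)
    _ = 1/2 * ((n:ℝ) * |d n| * |t|^n) := by ring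

noncomputable def Gf (ν : ℝ) : ℝ → ℝ := fun t => ∑' n : ℕ, bc ν n * t ^ n
noncomputable def Gf1 (ν : ℝ) : ℝ → ℝ := fun t => ∑' n : ℕ, bc1 ν n * t ^ n
noncomputable def Gf2 (ν : ℝ) : ℝ → ℝ := fun t => ∑' n : ℕ, bc2 ν n * t ^ n

lemma summable_bc {ν : ℝ} (hν : 0 < ν) (t : ℝ) : Summable (fun n : ℕ => bc ν n * t ^ n) :=
  (hasDerivAt_tsum_pow (bc ν) (bc_ne_zero hν) (ratio_of_step (bc_ne_zero hν) (bc_step hν))).1 t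

lemma summable_bc1 {ν : ℝ} (hν : 0 < ν) (t : ℝ) : Summable (fun n : ℕ => bc1 ν n * t ^ n) :=
  (hasDerivAt_tsum_pow (bc1 ν) (bc1_ne_zero hν) (ratio_of_step (bc1_ne_zero hν) (bc1_step hν))).1 t

lemma hasDerivAt_Gf {ν : ℝ} (hν : 0 < ν) {t : ℝ} (ht : t ≠ 0) :
    HasDerivAt (Gf ν) (Gf1 ν t) t := by
  have := (hasDerivAt_tsum_pow (bc ν) (bc_ne_zero hν)
    (ratio_of_step (bc_ne_zero hν) (bc_step hν))).2 t ht
  exact this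

lemma hasDerivAt_Gf1 {ν : ℝ} (hν : 0 < ν) {t : ℝ} (ht : t ≠ 0) :
    HasDerivAt (Gf1 ν) (Gf2 ν t) t := by
  have := (hasDerivAt_tsum_pow (bc1 ν) (bc1_ne_zero hν)
    (ratio_of_step (bc1_ne_zero hν) (bc1_step hν))).2 t ht
  exact this

/-- The Bessel function of the first kind of (real) order `ν`. -/
noncomputable def besselJ (ν x : ℝ) : ℝ :=
  ∑' n : ℕ, ((-1 : ℝ) ^ n / ((n.factorial : ℝ) * Real.Gamma ((n : ℝ) + ν + 1)))
    * (x / 2) ^ (2 * n) * (x / 2) ^ ν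

lemma besselJ_eq (ν x : ℝ) : besselJ ν x = Gf ν (x^2/4) * (x/2) ^ ν := by
  unfold besselJ Gf
  rw [← tsum_mul_right]
  apply tsum_congr
  intro n
  have h1 : (x/2) ^ (2*n) = (x^2/4) ^ n := by
    rw [pow_mul]
    congr 1
    ring
  rw [h1]
  rfl

lemma key_id {ν : ℝ} (hν : 0 < ν) (t : ℝ) :
    t * Gf2 ν t + (ν+1) * Gf1 ν t + Gf ν t = 0 := by
  have hA : Summable (fun n : ℕ => (n:ℝ) * bc1 ν n * t ^ n) :=
    summable_n_mul (bc1_step hν) t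
  have h2 : t * Gf2 ν t = ∑' n : ℕ, (n:ℝ) * bc1 ν n * t ^ n := by
    have h1 : ∀ n : ℕ, bc2 ν n * t ^ n * t
        = ((n:ℕ)+1 : ℝ) * bc1 ν (n+1) * t ^ (n+1) := by
      intro n
      simp only [bc2]
      push_cast
      ring
    calc t * Gf2 ν t = ∑' n : ℕ, ((n:ℕ)+1 : ℝ) * bc1 ν (n+1) * t ^ (n+1) := by
          unfold Gf2
          rw [mul_comm, ← tsum_mul_right]
          exact tsum_congr h1
      _ = ∑' n : ℕ, (n:ℝ) * bc1 ν n * t ^ n := by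
          rw [hA.tsum_eq_zero_add]
          simp only [Nat.cast_zero, zero_mul, pow_zero, mul_one, zero_add]
          apply tsum_congr
          intro n
          push_cast
          ring
  have h3 : (ν+1) * Gf1 ν t = ∑' n : ℕ, (ν+1) * (bc1 ν n * t ^ n) := by
    unfold Gf1; rw [← tsum_mul_left]
  rw [h2, h3]
  unfold Gf
  rw [← hA.tsum_add ((summable_bc1 hν t).mul_left _),
      ← (hA.add ((summable_bc1 hν t).mul_left _)).tsum_add (summable_bc hν t)]
  rw [← tsum_zero (β := ℕ)]
  apply tsum_congr
  intro n
  have hrec : bc ν (n+1) = -bc ν n / (((n:ℝ)+1) * ((n:ℝ)+ν+1)) := bc_succ hν n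
  have hden : (((n:ℝ)+1) * ((n:ℝ)+ν+1)) ≠ 0 := by positivity
  simp only [bc1]
  rw [hrec]
  field_simp
  ring

noncomputable def fB (ν : ℝ) : ℝ → ℝ := fun x => x ^ (ν + 1/2 : ℝ) * Gf ν (x^2/4)
noncomputable def DfB (ν : ℝ) : ℝ → ℝ := fun x =>
  (ν + 1/2) * x ^ (ν - 1/2 : ℝ) * Gf ν (x^2/4) + x ^ (ν + 1/2 : ℝ) * (Gf1 ν (x^2/4) * (x/2))
noncomputable def qB (ν : ℝ) : ℝ → ℝ := fun x => 1 + (1/4 - ν^2)/x^2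

lemma hasDerivAt_sq4 (x : ℝ) : HasDerivAt (fun y : ℝ => y^2/4) (x/2) x := by
  have : HasDerivAt (fun y : ℝ => y^2/4) _ x := (hasDerivAt_pow 2 x).div_const 4
  convert this using 1
  push_cast
  ring

lemma hasDerivAt_fB {ν : ℝ} (hν : 0 < ν) {x : ℝ} (hx : 0 < x) :
    HasDerivAt (fB ν) (DfB ν x) x := by
  have ht : x^2/4 ≠ 0 := by positivity
  have h1 : HasDerivAt (fun y : ℝ => y ^ (ν + 1/2 : ℝ))
      ((ν + 1/2) * x ^ (ν + 1/2 - 1 : ℝ)) x :=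
    Real.hasDerivAt_rpow_const (Or.inl hx.ne')
  have h3 : HasDerivAt (fun y : ℝ => Gf ν (y^2/4)) (Gf1 ν (x^2/4) * (x/2)) x :=
    by have h := (hasDerivAt_Gf hν ht).comp x (hasDerivAt_sq4 x); exact h
  have := h1.mul h3
  rw [show (ν + 1/2 - 1 : ℝ) = ν - 1/2 by ring] at this
  exact this

lemma hasDerivAt_DfB {ν : ℝ} (hν : 0 < ν) {x : ℝ} (hx : 0 < x) :
    HasDerivAt (DfB ν) (-(qB ν x) * fB ν x) x := by
  have ht : x^2/4 ≠ 0 := by positivity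
  have hsq := hasDerivAt_sq4 x
  have h1 : HasDerivAt (fun y : ℝ => y ^ (ν + 1/2 : ℝ))
      ((ν + 1/2) * x ^ (ν + 1/2 - 1 : ℝ)) x :=
    Real.hasDerivAt_rpow_const (Or.inl hx.ne')
  have h1' : HasDerivAt (fun y : ℝ => y ^ (ν - 1/2 : ℝ))
      ((ν - 1/2) * x ^ (ν - 1/2 - 1 : ℝ)) x :=
    Real.hasDerivAt_rpow_const (Or.inl hx.ne')
  have hG : HasDerivAt (fun y : ℝ => Gf ν (y^2/4)) (Gf1 ν (x^2/4) * (x/2)) x :=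
    by have h := (hasDerivAt_Gf hν ht).comp x hsq; exact h
  have hG1 : HasDerivAt (fun y : ℝ => Gf1 ν (y^2/4)) (Gf2 ν (x^2/4) * (x/2)) x :=
    by have h := (hasDerivAt_Gf1 hν ht).comp x hsq; exact h
  have hhalf : HasDerivAt (fun y : ℝ => y/2) (1/2 : ℝ) x := by
    simpa using (hasDerivAt_id x).div_const 2
  have hA : HasDerivAt (fun y : ℝ => (ν + 1/2) * y ^ (ν - 1/2 : ℝ) * Gf ν (y^2/4))
      (((ν + 1/2) * ((ν - 1/2) * x ^ (ν - 1/2 - 1 : ℝ))) * Gf ν (x^2/4)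
        + (ν + 1/2) * x ^ (ν - 1/2 : ℝ) * (Gf1 ν (x^2/4) * (x/2))) x :=
    ((h1'.const_mul (ν + 1/2)).mul hG)
  have hB : HasDerivAt (fun y : ℝ => y ^ (ν + 1/2 : ℝ) * (Gf1 ν (y^2/4) * (y/2)))
      ((ν + 1/2) * x ^ (ν + 1/2 - 1 : ℝ) * (Gf1 ν (x^2/4) * (x/2))
        + x ^ (ν + 1/2 : ℝ) * ((Gf2 ν (x^2/4) * (x/2)) * (x/2) + Gf1 ν (x^2/4) * (1/2))) x :=
    h1.mul (hG1.mul hhalf)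
  have htot := hA.add hB
  have heq : ((ν + 1/2) * ((ν - 1/2) * x ^ (ν - 1/2 - 1 : ℝ))) * Gf ν (x^2/4)
        + (ν + 1/2) * x ^ (ν - 1/2 : ℝ) * (Gf1 ν (x^2/4) * (x/2))
        + ((ν + 1/2) * x ^ (ν + 1/2 - 1 : ℝ) * (Gf1 ν (x^2/4) * (x/2))
        + x ^ (ν + 1/2 : ℝ) * ((Gf2 ν (x^2/4) * (x/2)) * (x/2) + Gf1 ν (x^2/4) * (1/2)))
      = -(qB ν x) * fB ν x := by
    have hkey := key_id hν (x^2/4)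
    have e1 : x ^ (ν - 1/2 : ℝ) = x ^ (ν - 1/2 - 1 : ℝ) * x := by
      have h := Real.rpow_add hx (ν - 1/2 - 1) 1
      rw [Real.rpow_one] at h
      rw [← h]
      congr 1
      ring
    have e2 : x ^ (ν + 1/2 : ℝ) = x ^ (ν - 1/2 - 1 : ℝ) * x^2 := by
      rw [show (ν + 1/2 : ℝ) = (ν - 1/2 - 1) + ((2:ℕ):ℝ) by push_cast; ring,
        Real.rpow_add hx, Real.rpow_natCast]
    have eB : x ^ (ν + 1/2 - 1 : ℝ) = x ^ (ν - 1/2 - 1 : ℝ) * x := by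
      rw [show (ν + 1/2 - 1 : ℝ) = ν - 1/2 by ring]
      exact e1
    have hq : -(qB ν x) * fB ν x
        = -((x^2 + (1/4 - ν^2)) * (x ^ (ν - 1/2 - 1 : ℝ) * Gf ν (x^2/4))) := by
      unfold qB fB
      rw [e2]
      field_simp
    rw [hq, eB, e1, e2]
    linear_combination (x ^ (ν - 1/2 - 1 : ℝ) * x^2) * hkey
  rw [heq] at htot
  exact htot

lemma fB_zero_iff {ν : ℝ} {x : ℝ} (hx : 0 < x) : fB ν x = 0 ↔ besselJ ν x = 0 := by
  rw [besselJ_eq]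
  unfold fB
  have h1 : (0:ℝ) < x ^ (ν + 1/2 : ℝ) := Real.rpow_pos_of_pos hx _
  have h2 : (0:ℝ) < (x/2) ^ ν := Real.rpow_pos_of_pos (by linarith) _
  constructor
  · intro h
    rcases mul_eq_zero.mp h with h | h
    · exact absurd h h1.ne'
    · rw [h]; ring
  · intro h
    rcases mul_eq_zero.mp h with h | h
    · rw [h]; ring
    · exact absurd h h2.ne'

lemma qB_ge_one {ν : ℝ} (hν2 : ν ≤ 1/2) (hν : 0 < ν) {x : ℝ} (hx : 0 < x) : 1 ≤ qB ν x := by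
  unfold qB
  have hc : 0 ≤ 1/4 - ν^2 := by nlinarith
  have : 0 ≤ (1/4 - ν^2)/x^2 := by positivity
  linarith

lemma qB_anti {ν : ℝ} (hν2 : ν ≤ 1/2) (hν : 0 < ν) {x y : ℝ} (hx : 0 < x) (hxy : x ≤ y) :
    qB ν y ≤ qB ν x := by
  unfold qB
  have hc : 0 ≤ 1/4 - ν^2 := by nlinarith
  have hy : 0 < y := lt_of_lt_of_le hx hxy
  have h2 : (1/4 - ν^2)/y^2 ≤ (1/4 - ν^2)/x^2 := by
    apply div_le_div_of_nonneg_left hc (by positivity)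
    nlinarith
  linarith

lemma qB_le {ν : ℝ} (hν2 : ν ≤ 1/2) (hν : 0 < ν) {a x : ℝ} (ha : 0 < a) (hax : a ≤ x) :
    qB ν x ≤ 1 + (1/4 - ν^2)/a^2 := qB_anti hν2 hν ha hax

lemma slope_deriv_nonneg_left {f : ℝ → ℝ} {d a b : ℝ} (hab : a < b)
    (hd : HasDerivAt f d a) (h0 : f a = 0) (hpos : ∀ x ∈ Ioo a b, 0 < f x) : 0 ≤ d := by
  have hs := hasDerivAt_iff_tendsto_slope.mp hd
  have hs2 : Tendsto (slope f a) (nhdsWithin a (Ioi a)) (nhds d) :=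
    hs.mono_left (nhdsWithin_mono a (fun x hx => ne_of_gt hx))
  apply ge_of_tendsto hs2
  filter_upwards [Ioo_mem_nhdsGT_of_mem (Set.mem_Ico.mpr ⟨le_refl a, hab⟩)] with x hx
  rw [slope_def_field]
  have h1 := hpos x hx
  have h2 : 0 < x - a := by have := hx.1; linarith
  rw [h0]
  apply div_nonneg (by linarith) (by linarith)

lemma slope_deriv_nonpos_right {f : ℝ → ℝ} {d a b : ℝ} (hab : a < b)
    (hd : HasDerivAt f d b) (h0 : f b = 0) (hpos : ∀ x ∈ Ioo a b, 0 < f x) : d ≤ 0 := by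
  have hs := hasDerivAt_iff_tendsto_slope.mp hd
  have hs2 : Tendsto (slope f b) (nhdsWithin b (Iio b)) (nhds d) :=
    hs.mono_left (nhdsWithin_mono b (fun x hx => ne_of_lt hx))
  apply le_of_tendsto hs2
  filter_upwards [Ioo_mem_nhdsLT_of_mem (Set.mem_Ioc.mpr ⟨hab, le_refl b⟩)] with x hx
  rw [slope_def_field]
  have h1 := hpos x hx
  have h2 : x - b < 0 := by have := hx.2; linarith
  rw [h0]
  apply div_nonpos_of_nonneg_of_nonpos (by linarith) (by linarith)

lemma monoOn_of_hasDerivAt {F F' : ℝ → ℝ} {a b : ℝ}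
    (hd : ∀ x ∈ Icc a b, HasDerivAt F (F' x) x) (h0 : ∀ x ∈ Icc a b, 0 ≤ F' x) :
    MonotoneOn F (Icc a b) := by
  apply monotoneOn_of_deriv_nonneg (convex_Icc a b)
  · exact fun x hx => (hd x hx).continuousAt.continuousWithinAt
  · intro x hx
    rw [interior_Icc] at hx
    exact ((hd x (Ioo_subset_Icc_self hx)).differentiableAt).differentiableWithinAt
  · intro x hx
    rw [interior_Icc] at hx
    rw [(hd x (Ioo_subset_Icc_self hx)).deriv]
    exact h0 x (Ioo_subset_Icc_self hx)

lemma antiOn_of_hasDerivAt {F F' : ℝ → ℝ} {a b : ℝ}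
    (hd : ∀ x ∈ Icc a b, HasDerivAt F (F' x) x) (h0 : ∀ x ∈ Icc a b, F' x ≤ 0) :
    AntitoneOn F (Icc a b) := by
  apply antitoneOn_of_deriv_nonpos (convex_Icc a b)
  · exact fun x hx => (hd x hx).continuousAt.continuousWithinAt
  · intro x hx
    rw [interior_Icc] at hx
    exact ((hd x (Ioo_subset_Icc_self hx)).differentiableAt).differentiableWithinAt
  · intro x hx
    rw [interior_Icc] at hx
    rw [(hd x (Ioo_subset_Icc_self hx)).deriv]
    exact h0 x (Ioo_subset_Icc_self hx)

lemma hasDerivAt_qB {ν : ℝ} {x : ℝ} (hx : 0 < x) :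
    HasDerivAt (qB ν) ((1/4 - ν^2) * (-(2*x^1)/(x^2)^2)) x := by
  have h1 : HasDerivAt (fun y : ℝ => (y^2)⁻¹) (-(2*x^1)/(x^2)^2) x := by
    have : HasDerivAt (fun y : ℝ => (y^2)⁻¹) _ x := (hasDerivAt_pow 2 x).inv (pow_ne_zero 2 hx.ne')
    convert this using 1
    try norm_num
  have h2 := (h1.const_mul (1/4 - ν^2)).const_add 1
  have : qB ν = fun y : ℝ => 1 + (1/4 - ν^2) * (y^2)⁻¹ := by
    funext y; unfold qB; rw [div_eq_mul_inv]
  rw [this]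
  convert h2 using 1
  try ring

lemma simple_zero {ν : ℝ} (hν : 0 < ν) (hν2 : ν ≤ 1/2)
    (hzs : Set.Countable {x : ℝ | 0 < x ∧ fB ν x = 0})
    {a : ℝ} (ha : 0 < a) (hfa : fB ν a = 0) (hDfa : DfB ν a = 0) : False := by
  set E : ℝ → ℝ := fun x => (DfB ν x)^2 + qB ν x * (fB ν x)^2 with hE
  have hC : 0 ≤ 1/4 - ν^2 := by nlinarith
  have hderiv : ∀ x ∈ Icc a (a+1),
      HasDerivAt E ((1/4 - ν^2) * (-(2*x^1)/(x^2)^2) * (fB ν x)^2) x := by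
    intro x hx
    have hx0 : 0 < x := lt_of_lt_of_le ha hx.1
    have h1 := (hasDerivAt_DfB hν hx0).pow 2
    have h2 := (hasDerivAt_qB (ν := ν) hx0).mul ((hasDerivAt_fB hν hx0).pow 2)
    have h3 : HasDerivAt (fun y => DfB ν y ^ 2 + qB ν y * fB ν y ^ 2) _ x := h1.add h2
    convert h3 using 1
    simp only [Pi.pow_apply]
    push_cast
    ring
  have hanti : AntitoneOn E (Icc a (a+1)) := by
    apply antiOn_of_hasDerivAt hderiv
    intro x hx
    have hx0 : 0 < x := lt_of_lt_of_le ha hx.1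
    have h1 : (1/4 - ν^2) * (-(2*x^1)/(x^2)^2) ≤ 0 := by
      apply mul_nonpos_of_nonneg_of_nonpos hC
      apply div_nonpos_of_nonpos_of_nonneg (by nlinarith) (by positivity)
    exact mul_nonpos_of_nonpos_of_nonneg h1 (sq_nonneg _)
  have hEa : E a = 0 := by rw [hE]; simp [hfa, hDfa]
  have hzero : ∀ x ∈ Icc a (a+1), fB ν x = 0 := by
    intro x hx
    have hx0 : 0 < x := lt_of_lt_of_le ha hx.1
    have h1 : E x ≤ 0 := by
      rw [← hEa]
      exact hanti (mem_Icc.mpr ⟨le_refl a, by linarith⟩) hx hx.1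
    have h2 := qB_ge_one hν2 hν hx0
    simp only [hE] at h1
    have h4 : (fB ν x)^2 ≤ 0 := by nlinarith [sq_nonneg (DfB ν x), sq_nonneg (fB ν x)]
    have h5 : (fB ν x)^2 = 0 := le_antisymm h4 (sq_nonneg _)
    exact pow_eq_zero_iff two_ne_zero |>.mp h5
  have hsub : Icc a (a+1) ⊆ {x : ℝ | 0 < x ∧ fB ν x = 0} := by
    intro x hx
    exact ⟨lt_of_lt_of_le ha hx.1, hzero x hx⟩
  have h2 : MeasureTheory.volume {x : ℝ | 0 < x ∧ fB ν x = 0} = 0 :=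
    hzs.measure_zero _
  have h3 := MeasureTheory.measure_mono (μ := MeasureTheory.volume) hsub
  rw [h2, Real.volume_Icc] at h3
  rw [show a + 1 - a = 1 by ring] at h3
  simp [ENNReal.ofReal_one] at h3

lemma sign_of_no_zero {ν : ℝ} (hν : 0 < ν) {a b : ℝ} (ha : 0 < a) (hab : a < b)
    (hnz : ∀ x ∈ Ioo a b, fB ν x ≠ 0) :
    ∃ σ : ℝ, (σ = 1 ∨ σ = -1) ∧ ∀ x ∈ Ioo a b, 0 < σ * fB ν x := by
  have hcont : ContinuousOn (fB ν) (Ioo a b) := by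
    intro x hx
    have hx0 : 0 < x := lt_trans ha hx.1
    exact (hasDerivAt_fB hν hx0).continuousAt.continuousWithinAt
  set w := (a+b)/2 with hw
  have hwm : w ∈ Ioo a b := ⟨by rw [hw]; linarith, by rw [hw]; linarith⟩
  have key : ∀ y z : ℝ, y ∈ Ioo a b → z ∈ Ioo a b → 0 < fB ν y → fB ν z < 0 → False := by
    intro y z hy hz h1 h2
    have hsub : uIcc y z ⊆ Ioo a b := by
      rw [uIcc_eq_union]
      rintro t (ht | ht)
      · exact ⟨lt_of_lt_of_le hy.1 ht.1, lt_of_le_of_lt ht.2 hz.2⟩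
      · exact ⟨lt_of_lt_of_le hz.1 ht.1, lt_of_le_of_lt ht.2 hy.2⟩
    have := intermediate_value_uIcc (hcont.mono hsub)
    have h0 : (0:ℝ) ∈ uIcc (fB ν y) (fB ν z) := by
      rw [mem_uIcc]
      right; constructor <;> linarith
    obtain ⟨t, ht, ht0⟩ := this h0
    exact hnz t (hsub ht) ht0
  rcases lt_or_gt_of_ne (hnz w hwm) with hneg | hpos
  · refine ⟨-1, Or.inr rfl, fun x hx => ?_⟩
    rcases lt_or_gt_of_ne (hnz x hx) with h | h
    · nlinarith
    · exact absurd (key x w hx hwm h hneg) id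
  · refine ⟨1, Or.inl rfl, fun x hx => ?_⟩
    rcases lt_or_gt_of_ne (hnz x hx) with h | h
    · exact absurd (key w x hwm hx hpos h) id
    · nlinarith

lemma hasDerivAt_wronskian {u v u' v' : ℝ → ℝ} {du' dv' : ℝ} {x : ℝ}
    (hu : HasDerivAt u (u' x) x) (hv : HasDerivAt v (v' x) x)
    (hu' : HasDerivAt u' du' x) (hv' : HasDerivAt v' dv' x) :
    HasDerivAt (fun y => u y * v' y - u' y * v y) (u x * dv' - du' * v x) x := by
  have h : HasDerivAt (fun y => u y * v' y - u' y * v y) _ x := (hu.mul hv').sub (hu'.mul hv)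
  convert h using 1
  ring

lemma sturm_upper {ν : ℝ} (hν : 0 < ν) (hν2 : ν ≤ 1/2) {a b : ℝ} (ha : 0 < a) (hab : a < b)
    (hfa : fB ν a = 0) (hnz : ∀ x ∈ Ioo a b, fB ν x ≠ 0) :
    b - a ≤ Real.pi := by
  have hpi := Real.pi_pos
  by_contra hle
  push_neg at hle
  obtain ⟨σ, hσ, hpos⟩ := sign_of_no_zero hν ha hab hnz
  set u : ℝ → ℝ := fun x => σ * fB ν x with hu_def
  set u' : ℝ → ℝ := fun x => σ * DfB ν x with hu'_def
  have hu : ∀ x : ℝ, 0 < x → HasDerivAt u (u' x) x :=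
    fun x hx => (hasDerivAt_fB hν hx).const_mul σ
  have hu' : ∀ x : ℝ, 0 < x → HasDerivAt u' (σ * (-(qB ν x) * fB ν x)) x :=
    fun x hx => (hasDerivAt_DfB hν hx).const_mul σ
  set W : ℝ → ℝ := fun x => u x * Real.cos (x - a) - u' x * Real.sin (x - a) with hW_def
  have hW : ∀ x ∈ Icc a (a + Real.pi),
      HasDerivAt W ((qB ν x - 1) * (u x * Real.sin (x - a))) x := by
    intro x hx
    have hx0 : 0 < x := lt_of_lt_of_le ha hx.1
    have hv : HasDerivAt (fun y : ℝ => Real.sin (y - a)) (Real.cos (x - a)) x := by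
      have h : HasDerivAt (fun y : ℝ => Real.sin (y - a)) (Real.cos (x - a) * 1) x := by
        have h0 := (Real.hasDerivAt_sin (x-a)).comp x ((hasDerivAt_id x).sub_const a); exact h0
      simpa using h
    have hv' : HasDerivAt (fun y : ℝ => Real.cos (y - a)) (-Real.sin (x - a)) x := by
      have h : HasDerivAt (fun y : ℝ => Real.cos (y - a)) (-Real.sin (x - a) * 1) x := by
        have h0 := (Real.hasDerivAt_cos (x-a)).comp x ((hasDerivAt_id x).sub_const a); exact h0
      simpa using h
    have h := hasDerivAt_wronskian (hu x hx0) hv (hu' x hx0) hv'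
    convert h using 1
    simp only [hu_def]
    ring
  have hmono : MonotoneOn W (Icc a (a + Real.pi)) := by
    apply monoOn_of_hasDerivAt hW
    intro x hx
    have hx0 : 0 < x := lt_of_lt_of_le ha hx.1
    have hq := qB_ge_one hν2 hν hx0
    have hupos : 0 ≤ u x := by
      rcases eq_or_lt_of_le hx.1 with h | h
      · simp [hu_def, ← h, hfa]
      · exact le_of_lt (hpos x ⟨h, by linarith [hx.2]⟩)
    have hsin : 0 ≤ Real.sin (x - a) :=
      Real.sin_nonneg_of_nonneg_of_le_pi (by linarith [hx.1]) (by linarith [hx.2])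
    have : 0 ≤ u x * Real.sin (x - a) := mul_nonneg hupos hsin
    nlinarith
  have hWa : W a = 0 := by
    simp [hW_def, hu_def, hfa]
  have hWpi : W (a + Real.pi) = -u (a + Real.pi) := by
    simp only [hW_def]
    rw [show a + Real.pi - a = Real.pi by ring]
    simp [Real.cos_pi, Real.sin_pi]
  have hup : 0 < u (a + Real.pi) := hpos _ ⟨by linarith, by linarith⟩
  have h := hmono (mem_Icc.mpr ⟨le_refl a, by linarith⟩)
    (mem_Icc.mpr ⟨by linarith, le_refl _⟩) (by linarith)
  rw [hWa, hWpi] at h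
  linarith

lemma sturm_lower {ν : ℝ} (hν : 0 < ν) (hν2 : ν ≤ 1/2)
    (hzs : Set.Countable {x : ℝ | 0 < x ∧ fB ν x = 0})
    {a b K : ℝ} (ha : 0 < a) (hab : a < b)
    (hfa : fB ν a = 0) (hfb : fB ν b = 0) (hnz : ∀ x ∈ Ioo a b, fB ν x ≠ 0)
    (hK1 : 1 ≤ K) (hK : ∀ x ∈ Icc a b, qB ν x ≤ K) :
    Real.pi / Real.sqrt K ≤ b - a := by
  have hpi := Real.pi_pos
  by_contra hle
  push_neg at hle
  have hK0 : (0:ℝ) < K := by linarith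
  set ω := Real.sqrt K with hω_def
  have hω : 0 < ω := Real.sqrt_pos.mpr hK0
  have hω2 : ω^2 = K := Real.sq_sqrt hK0.le
  have hba : ω * (b - a) < Real.pi := by
    have h1 : ω * (b - a) < ω * (Real.pi / ω) := mul_lt_mul_of_pos_left hle hω
    have h2 : ω * (Real.pi / ω) = Real.pi := by field_simp
    linarith
  obtain ⟨σ, hσ, hpos⟩ := sign_of_no_zero hν ha hab hnz
  set u : ℝ → ℝ := fun x => σ * fB ν x with hu_def
  set u' : ℝ → ℝ := fun x => σ * DfB ν x with hu'_def
  have hu : ∀ x : ℝ, 0 < x → HasDerivAt u (u' x) x :=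
    fun x hx => (hasDerivAt_fB hν hx).const_mul σ
  have hu' : ∀ x : ℝ, 0 < x → HasDerivAt u' (σ * (-(qB ν x) * fB ν x)) x :=
    fun x hx => (hasDerivAt_DfB hν hx).const_mul σ
  set v : ℝ → ℝ := fun x => Real.sin (ω * (x - a)) with hv_def
  set v' : ℝ → ℝ := fun x => ω * Real.cos (ω * (x - a)) with hv'_def
  have hv : ∀ x : ℝ, HasDerivAt v (v' x) x := by
    intro x
    have h : HasDerivAt (fun y : ℝ => Real.sin (ω * (y - a))) (Real.cos (ω*(x-a)) * (ω * 1)) x := by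
      have h0 := (Real.hasDerivAt_sin (ω*(x-a))).comp x
          (((hasDerivAt_id x).sub_const a).const_mul ω); exact h0
    simp only [hv_def, hv'_def]
    convert h using 1
    ring
  have hv' : ∀ x : ℝ, HasDerivAt v' (-(ω^2) * v x) x := by
    intro x
    have h : HasDerivAt (fun y : ℝ => ω * Real.cos (ω * (y - a))) (ω * (-Real.sin (ω*(x-a)) * (ω * 1))) x := by
      have h0 := ((Real.hasDerivAt_cos (ω*(x-a))).comp x
          (((hasDerivAt_id x).sub_const a).const_mul ω)).const_mul ω; exact h0
    simp only [hv_def, hv'_def]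
    convert h using 1
    ring
  set W : ℝ → ℝ := fun x => v x * u' x - v' x * u x with hW_def
  have hW : ∀ x ∈ Icc a b, HasDerivAt W ((K - qB ν x) * (u x * v x)) x := by
    intro x hx
    have hx0 : 0 < x := lt_of_lt_of_le ha hx.1
    have h := hasDerivAt_wronskian (hv x) (hu x hx0) (hv' x) (hu' x hx0)
    convert h using 1
    simp only [hu_def, hv_def]
    rw [← hω2]
    ring
  have husign : ∀ x ∈ Icc a b, 0 ≤ u x := by
    intro x hx
    rcases eq_or_lt_of_le hx.1 with h | h
    · simp [hu_def, ← h, hfa]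
    rcases eq_or_lt_of_le hx.2 with h2 | h2
    · simp [hu_def, h2, hfb]
    exact le_of_lt (hpos x ⟨h, h2⟩)
  have hmono : MonotoneOn W (Icc a b) := by
    apply monoOn_of_hasDerivAt hW
    intro x hx
    have hqx := hK x hx
    have hvsign : 0 ≤ v x := by
      apply Real.sin_nonneg_of_nonneg_of_le_pi
      · have := hx.1; nlinarith
      · have h1 : ω * (x - a) ≤ ω * (b - a) := by
          apply mul_le_mul_of_nonneg_left (by linarith [hx.2]) hω.le
        linarith
    nlinarith [mul_nonneg (husign x hx) hvsign]
  have hWa : W a = 0 := by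
    simp [hW_def, hu_def, hv_def, hfa]
  have hWb : W b = v b * u' b := by
    simp [hW_def, hu_def, hfb]
  have hvb : 0 < v b := by
    apply Real.sin_pos_of_pos_of_lt_pi
    · have := sub_pos.mpr hab; positivity
    · exact hba
  have hub' : u' b < 0 := by
    have hb0 : 0 < b := lt_trans ha hab
    have h1 : u' b ≤ 0 := by
      apply slope_deriv_nonpos_right hab (hu b hb0)
      · simp [hu_def, hfb]
      · exact hpos
    rcases eq_or_lt_of_le h1 with h | h
    · exfalso
      have hσ0 : σ ≠ 0 := by rcases hσ with h' | h' <;> rw [h'] <;> norm_num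
      have h'' : σ * DfB ν b = 0 := by
        have := h.symm
        simpa [hu'_def] using this
      have hDfb : DfB ν b = 0 := (mul_eq_zero.mp h'').resolve_left hσ0
      exact simple_zero hν hν2 hzs hb0 hfb hDfb
    · exact h
  have h := hmono (mem_Icc.mpr ⟨le_refl a, hab.le⟩) (mem_Icc.mpr ⟨hab.le, le_refl b⟩) hab.le
  rw [hWa, hWb] at h
  nlinarith

lemma sturm_mono {ν : ℝ} (hν : 0 < ν) (hν2 : ν ≤ 1/2)
    (hzs : Set.Countable {x : ℝ | 0 < x ∧ fB ν x = 0})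
    {a b c : ℝ} (ha : 0 < a) (hab : a < b) (hbc : b < c)
    (hfa : fB ν a = 0) (hfb : fB ν b = 0) (hfc : fB ν c = 0)
    (hnz1 : ∀ x ∈ Ioo a b, fB ν x ≠ 0) (hnz2 : ∀ x ∈ Ioo b c, fB ν x ≠ 0) :
    b - a ≤ c - b := by
  by_contra hle
  push_neg at hle
  set δ : ℝ := b - a with hδ_def
  have hδ : 0 < δ := by simp only [hδ_def]; linarith
  have hcd : c - δ < b := by simp only [hδ_def]; linarith
  have hacd : a < c - δ := by simp only [hδ_def]; linarith
  obtain ⟨σ₁, hσ₁, hpos₁⟩ := sign_of_no_zero hν ha hab hnz1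
  obtain ⟨σ₂, hσ₂, hpos₂⟩ := sign_of_no_zero hν (lt_trans ha hab) hbc hnz2
  set u : ℝ → ℝ := fun x => σ₁ * fB ν x with hu_def
  set u' : ℝ → ℝ := fun x => σ₁ * DfB ν x with hu'_def
  have hu : ∀ x : ℝ, 0 < x → HasDerivAt u (u' x) x :=
    fun x hx => (hasDerivAt_fB hν hx).const_mul σ₁
  have hu' : ∀ x : ℝ, 0 < x → HasDerivAt u' (σ₁ * (-(qB ν x) * fB ν x)) x :=
    fun x hx => (hasDerivAt_DfB hν hx).const_mul σ₁
  set g : ℝ → ℝ := fun x => σ₂ * fB ν (x + δ) with hg_def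
  set g' : ℝ → ℝ := fun x => σ₂ * DfB ν (x + δ) with hg'_def
  have hshift : ∀ x : ℝ, HasDerivAt (fun y : ℝ => y + δ) 1 x :=
    fun x => (hasDerivAt_id x).add_const δ
  have hg : ∀ x : ℝ, 0 < x → HasDerivAt g (g' x) x := by
    intro x hx
    have h : HasDerivAt (fun y : ℝ => σ₂ * fB ν (y + δ)) (σ₂ * (DfB ν (x + δ) * 1)) x := by
      have h0 := ((hasDerivAt_fB hν (by linarith : (0:ℝ) < x + δ)).comp x (hshift x)).const_mul σ₂; exact h0
    simp only [hg_def, hg'_def]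
    convert h using 1
    ring
  have hg' : ∀ x : ℝ, 0 < x →
      HasDerivAt g' (σ₂ * (-(qB ν (x + δ)) * fB ν (x + δ))) x := by
    intro x hx
    have h : HasDerivAt (fun y : ℝ => σ₂ * DfB ν (y + δ)) (σ₂ * ((-(qB ν (x + δ)) * fB ν (x + δ)) * 1)) x := by
      have h0 := ((hasDerivAt_DfB hν (by linarith : (0:ℝ) < x + δ)).comp x (hshift x)).const_mul σ₂; exact h0
    simp only [hg'_def]
    convert h using 1
    ring
  set W : ℝ → ℝ := fun x => u x * g' x - u' x * g x with hW_def
  have hW : ∀ x ∈ Icc a (c - δ),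
      HasDerivAt W ((qB ν x - qB ν (x + δ)) * (u x * g x)) x := by
    intro x hx
    have hx0 : 0 < x := lt_of_lt_of_le ha hx.1
    have h := hasDerivAt_wronskian (hu x hx0) (hg x hx0) (hu' x hx0) (hg' x hx0)
    convert h using 1
    simp only [hu_def, hg_def]
    ring
  have husign : ∀ x ∈ Icc a (c - δ), 0 ≤ u x := by
    intro x hx
    rcases eq_or_lt_of_le hx.1 with h | h
    · simp [hu_def, ← h, hfa]
    · exact le_of_lt (hpos₁ x ⟨h, lt_of_le_of_lt hx.2 hcd⟩)
  have hgsign : ∀ x ∈ Icc a (c - δ), 0 ≤ g x := by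
    intro x hx
    rcases eq_or_lt_of_le hx.1 with h | h
    · have : a + δ = b := by simp only [hδ_def]; ring
      simp [hg_def, ← h, this, hfb]
    rcases eq_or_lt_of_le hx.2 with h2 | h2
    · have : c - δ + δ = c := by ring
      simp [hg_def, h2, this, hfc]
    · apply le_of_lt (hpos₂ (x + δ) ⟨by simp only [hδ_def]; linarith, by linarith⟩)
  have hmono : MonotoneOn W (Icc a (c - δ)) := by
    apply monoOn_of_hasDerivAt hW
    intro x hx
    have hx0 : 0 < x := lt_of_lt_of_le ha hx.1
    have hq : qB ν (x + δ) ≤ qB ν x := qB_anti hν2 hν hx0 (by linarith)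
    have := mul_nonneg (husign x hx) (hgsign x hx)
    nlinarith
  have hWa : W a = 0 := by
    have hb' : a + δ = b := by simp only [hδ_def]; ring
    simp [hW_def, hu_def, hg_def, hfa, hb', hfb]
  have hWcd : W (c - δ) = u (c - δ) * g' (c - δ) := by
    have hc' : c - δ + δ = c := by ring
    simp [hW_def, hg_def, hc', hfc]
  have hucd : 0 < u (c - δ) := hpos₁ _ ⟨hacd, hcd⟩
  have hgcd' : g' (c - δ) < 0 := by
    have hcd0 : 0 < c - δ := lt_trans ha hacd
    have h1 : g' (c - δ) ≤ 0 := by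
      apply slope_deriv_nonpos_right hacd (hg _ hcd0)
      · have hc' : c - δ + δ = c := by ring
        simp [hg_def, hc', hfc]
      · intro x hx
        apply hpos₂ (x + δ)
        constructor
        · simp only [hδ_def]; linarith [hx.1]
        · linarith [hx.2]
    rcases eq_or_lt_of_le h1 with h | h
    · exfalso
      have hσ0 : σ₂ ≠ 0 := by rcases hσ₂ with h' | h' <;> rw [h'] <;> norm_num
      have h'' : σ₂ * DfB ν c = 0 := by
        have := h.symm
        have hc' : c - δ + δ = c := by ring
        simpa [hg'_def, hc'] using this
      have hDfc : DfB ν c = 0 := (mul_eq_zero.mp h'').resolve_left hσ0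
      exact simple_zero hν hν2 hzs (by linarith : (0:ℝ) < c) hfc hDfc
    · exact h
  have h := hmono (mem_Icc.mpr ⟨le_refl a, hacd.le⟩)
    (mem_Icc.mpr ⟨hacd.le, le_refl _⟩) hacd.le
  rw [hWa, hWcd] at h
  nlinarith

theorem bessel_zero_gaps_nondecreasing_tendsto_pi
    (ν : ℝ) (hν : 0 < ν ∧ ν ≤ 1/2) (j : ℕ → ℝ)
    (hpos : ∀ k, 1 ≤ k → 0 < j k)
    (hzero : ∀ k, 1 ≤ k → besselJ ν (j k) = 0)
    (hmono : ∀ k, 1 ≤ k → j k < j (k + 1))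
    (hall : ∀ x, 0 < x → besselJ ν x = 0 → ∃ k, 1 ≤ k ∧ j k = x) :
    (∀ k, 1 ≤ k → j (k + 1) - j k ≤ j (k + 2) - j (k + 1)) ∧
    Filter.Tendsto (fun k => j (k + 1) - j k) Filter.atTop (nhds Real.pi) := by
  obtain ⟨hν1, hν2⟩ := hν
  have hzs : Set.Countable {x : ℝ | 0 < x ∧ fB ν x = 0} := by
    apply Set.Countable.mono _ (Set.countable_range j)
    rintro x ⟨hx, hfx⟩
    obtain ⟨k, _, hk⟩ := hall x hx ((fB_zero_iff hx).mp hfx)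
    exact ⟨k, hk⟩
  have hjlt : ∀ k, 1 ≤ k → ∀ m, k < m → j k < j m := by
    intro k hk m hm
    induction m with
    | zero => omega
    | succ n ih =>
      rcases Nat.lt_succ_iff_lt_or_eq.mp hm with h | h
      · exact lt_trans (ih h) (hmono n (by omega))
      · subst h; exact hmono k hk
  have hfzk : ∀ k, 1 ≤ k → fB ν (j k) = 0 :=
    fun k hk => (fB_zero_iff (hpos k hk)).mpr (hzero k hk)
  have hnz : ∀ k, 1 ≤ k → ∀ x ∈ Ioo (j k) (j (k+1)), fB ν x ≠ 0 := by
    intro k hk x hx hfx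
    have hx0 : 0 < x := lt_trans (hpos k hk) hx.1
    obtain ⟨m, hm1, hmx⟩ := hall x hx0 ((fB_zero_iff hx0).mp hfx)
    rcases le_or_gt m k with h | h
    · have h2 : j m ≤ j k := by
        rcases eq_or_lt_of_le h with h' | h'
        · rw [h']
        · exact (hjlt m hm1 k h').le
      rw [hmx] at h2
      linarith [hx.1]
    · have h2 : j (k+1) ≤ j m := by
        rcases eq_or_lt_of_le (Nat.succ_le_of_lt h) with h' | h'
        · rw [show k + 1 = m from h']
        · exact (hjlt (k+1) (by omega) m h').le
      rw [hmx] at h2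
      linarith [hx.2]
  have part1 : ∀ k, 1 ≤ k → j (k + 1) - j k ≤ j (k + 2) - j (k + 1) := by
    intro k hk
    exact sturm_mono hν1 hν2 hzs (hpos k hk) (hmono k hk) (hmono (k+1) (by omega))
      (hfzk k hk) (hfzk (k+1) (by omega)) (hfzk (k+2) (by omega))
      (hnz k hk) (hnz (k+1) (by omega))
  refine ⟨part1, ?_⟩
  have gap_le_pi : ∀ k, 1 ≤ k → j (k+1) - j k ≤ Real.pi :=
    fun k hk => sturm_upper hν1 hν2 (hpos k hk) (hmono k hk) (hfzk k hk) (hnz k hk)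
  set C : ℝ := 1/4 - ν^2 with hC_def
  have hC : 0 ≤ C := by simp only [hC_def]; nlinarith
  have gap_ge : ∀ k, 1 ≤ k →
      Real.pi / Real.sqrt (1 + C/(j k)^2) ≤ j (k+1) - j k := by
    intro k hk
    have hjk := hpos k hk
    apply sturm_lower hν1 hν2 hzs hjk (hmono k hk) (hfzk k hk) (hfzk (k+1) (by omega))
      (hnz k hk)
    · have : 0 ≤ C/(j k)^2 := by positivity
      linarith
    · intro x hx
      exact qB_le hν2 hν1 hjk hx.1
  have hgap1 : ∀ k, 1 ≤ k → j 2 - j 1 ≤ j (k+1) - j k := by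
    intro k hk
    induction k with
    | zero => omega
    | succ n ih =>
      rcases Nat.eq_or_lt_of_le hk with h | h
      · simp [← h]
      · have hn : 1 ≤ n := by omega
        have := part1 n hn
        have := ih hn
        linarith
  have hg0 : 0 < j 2 - j 1 := by linarith [hmono 1 le_rfl]
  have hlow : ∀ k : ℕ, j 1 + (k:ℝ) * (j 2 - j 1) ≤ j (k+1) := by
    intro k
    induction k with
    | zero => simp
    | succ n ih =>
      have h1 := hgap1 (n+1) (by omega)
      push_cast
      push_cast at ih
      linarith
  have htend' : Tendsto (fun k : ℕ => j (k+1)) atTop atTop := by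
    apply tendsto_atTop_mono hlow
    apply tendsto_atTop_add_const_left
    exact Tendsto.atTop_mul_const hg0 tendsto_natCast_atTop_atTop
  have htend : Tendsto (fun k : ℕ => j k) atTop atTop :=
    (Filter.tendsto_add_atTop_iff_nat 1).mp htend'
  have hLtend : Tendsto (fun k : ℕ => Real.pi / Real.sqrt (1 + C/(j k)^2)) atTop
      (nhds Real.pi) := by
    have h1 : Tendsto (fun k : ℕ => (j k)^2) atTop atTop :=
      (tendsto_pow_atTop two_ne_zero).comp htend
    have h2 : Tendsto (fun k : ℕ => C/(j k)^2) atTop (nhds 0) :=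
      Tendsto.div_atTop tendsto_const_nhds h1
    have h3 : Tendsto (fun k : ℕ => 1 + C/(j k)^2) atTop (nhds 1) := by
      have := (tendsto_const_nhds (x := (1:ℝ)) (f := atTop (α := ℕ))).add h2
      simpa using this
    have h4 : Tendsto (fun k : ℕ => Real.sqrt (1 + C/(j k)^2)) atTop (nhds 1) := by
      have := h3.sqrt
      simpa using this
    have h5 := Tendsto.div (tendsto_const_nhds (x := Real.pi) (f := atTop (α := ℕ))) h4 one_ne_zero
    simpa [Pi.div_def] using h5
  apply tendsto_of_tendsto_of_tendsto_of_le_of_le' hLtend tendsto_const_nhds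
  · filter_upwards [eventually_ge_atTop 1] with k hk
    exact gap_ge k hk
  · filter_upwards [eventually_ge_atTop 1] with k hk
    exact gap_le_pi k hk
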